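/- For any integer a ≥ 2, the real number (log a)/(log Φ) is irrational, where Φ = (1 + √5)/2. -/

import Mathlib

open goldenRatio in
lemma gold_pow_irrational (n : ℕ) (hn : 1 ≤ n) : Irrational (Real.goldenRatio ^ n) := by
  obtain ⟨m, rfl⟩ : ∃ m, n = m + 1 := ⟨n - 1, (Nat.succ_pred_eq_of_pos hn).symm⟩
  rw [← Real.goldenRatio_mul_fib_succ_add_fib m]
  have h1 : Irrational ((Nat.fib (m + 1) : ℝ) * φ) :=
    Real.goldenRatio_irrational.natCast_mul ((Nat.fib_pos.mpr (Nat.succ_pos m)).ne')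
  have h2 : Irrational ((Nat.fib (m + 1) : ℝ) * φ + (Nat.fib m : ℝ)) := h1.add_natCast _
  simpa [mul_comm] using h2

/-- The golden ratio Φ = (1 + √5)/2. -/
noncomputable def Phi : ℝ := (1 + Real.sqrt 5) / 2

lemma Phi_eq : Phi = Real.goldenRatio := by
  simp [Phi, Real.goldenRatio]

/-- For every integer `a ≥ 2`, the real number `log a / log Φ` is irrational. -/
theorem irrational_log_div_log_phi (a : ℕ) (ha : 2 ≤ a) :
    Irrational (Real.log a / Real.log Phi) := by
  rw [Phi_eq]
  have hgold : (1:ℝ) < Real.goldenRatio := Real.one_lt_goldenRatio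
  have hlogg : 0 < Real.log Real.goldenRatio := Real.log_pos hgold
  have ha1 : (1:ℝ) < a := by exact_mod_cast ha.trans_lt' one_lt_two
  have hloga : 0 < Real.log a := Real.log_pos ha1
  rw [Irrational]
  intro ⟨r, hr⟩
  -- r = log a / log φ, so log a = r * log φ
  have hr' : Real.log a = (r : ℝ) * Real.log Real.goldenRatio := by
    field_simp at hr
    linarith [hr]
  have hrpos : 0 < (r : ℝ) := by
    by_contra h
    push_neg at h
    nlinarith
  have hrq : 0 < r := by exact_mod_cast hrpos
  -- a = φ ^ (r : ℝ)
  have hexp : (a : ℝ) = Real.goldenRatio ^ (r : ℝ) := by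
    have := Real.exp_log (x := (a:ℝ)) (by linarith)
    rw [← this, hr', Real.rpow_def_of_pos (by linarith : (0:ℝ) < Real.goldenRatio), mul_comm]
  -- raise to power r.den
  have key : (a : ℝ) ^ (r.den : ℕ) = Real.goldenRatio ^ (r.num.toNat : ℕ) := by
    have h1 : ((a : ℝ) ^ (r.den : ℕ)) = Real.goldenRatio ^ ((r : ℝ) * r.den) := by
      rw [hexp, ← Real.rpow_natCast (Real.goldenRatio ^ (r : ℝ)) r.den,
        ← Real.rpow_mul (by linarith)]
    have h2 : (r : ℝ) * r.den = (r.num.toNat : ℕ) := by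
      have hnum : (0:ℤ) ≤ r.num := le_of_lt (Rat.num_pos.mpr hrq)
      have hrr : (r:ℝ) = (r.num:ℝ) / (r.den:ℝ) := by exact_mod_cast (Rat.num_div_den r).symm
      have hd : (r.den : ℝ) ≠ 0 := by positivity
      rw [hrr]
      field_simp
      exact_mod_cast (Int.toNat_of_nonneg hnum).symm
    rw [h1, h2, Real.rpow_natCast]
  have hn1 : 1 ≤ r.num.toNat := by
    have := Rat.num_pos.mpr hrq
    omega
  have hirr := gold_pow_irrational _ hn1
  rw [← key] at hirr
  exact hirr ⟨((a : ℚ) ^ r.den), by push_cast; ring⟩
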